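/- For every ε > 0 there exist b > 1, c > 0 with c < 2√b, and a T-periodic measurable function a : ℝ₊ → ℝ with 0 ≤ a(t) ≤ C and C < (π + ε)·c·√b, such that the equation u'' + c u' + (b + a(t)) u = 0 has an unbounded solution on ℝ₊. -/

import Mathlib

open MeasureTheory Real

set_option maxHeartbeats 1000000

noncomputable section StmtAux

namespace Stmt14Aux

/-- period -/
noncomputable def Tp (Ω : ℝ) : ℝ := π/2 + π/(2*Ω)

noncomputable def f₁ (Ω : ℝ) (n : ℤ) (x : ℝ) : ℝ := (-Ω)^n * Real.sin (x - n * Tp Ω)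
noncomputable def f₂ (Ω : ℝ) (n : ℤ) (x : ℝ) : ℝ :=
  (-Ω)^n * Real.cos (Ω * (x - (n * Tp Ω + π/2)))
noncomputable def d₁ (Ω : ℝ) (n : ℤ) (x : ℝ) : ℝ := (-Ω)^n * Real.cos (x - n * Tp Ω)
noncomputable def d₂ (Ω : ℝ) (n : ℤ) (x : ℝ) : ℝ :=
  -((-Ω)^n * (Ω * Real.sin (Ω * (x - (n * Tp Ω + π/2)))))

noncomputable def yy (Ω t : ℝ) : ℝ :=
  if t - Tp Ω * ⌊t / Tp Ω⌋ < π/2 then f₁ Ω ⌊t / Tp Ω⌋ t else f₂ Ω ⌊t / Tp Ω⌋ t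

noncomputable def yyd (Ω t : ℝ) : ℝ :=
  if t - Tp Ω * ⌊t / Tp Ω⌋ < π/2 then d₁ Ω ⌊t / Tp Ω⌋ t else d₂ Ω ⌊t / Tp Ω⌋ t

noncomputable def aa (Ω t : ℝ) : ℝ :=
  if t - Tp Ω * ⌊t / Tp Ω⌋ < π/2 then 0 else Ω^2 - 1

variable {Ω : ℝ}

lemma Tp_pos (hΩ : 1 < Ω) : 0 < Tp Ω := by
  have := Real.pi_pos
  have h1 : 0 < π/(2*Ω) := by positivity
  unfold Tp; linarith

lemma Tp_gt (hΩ : 1 < Ω) : π/2 < Tp Ω := by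
  have := Real.pi_pos
  have h1 : 0 < π/(2*Ω) := by positivity
  unfold Tp; linarith

lemma Tp_lt (hΩ : 1 < Ω) : Tp Ω < π := by
  have hpi := Real.pi_pos
  have h0 : (0:ℝ) < 2*Ω := by linarith
  have h1 : π/(2*Ω) < π/2 := by
    apply div_lt_div_of_pos_left hpi (by norm_num) (by linarith)
  unfold Tp; linarith

lemma Omega_T (hΩ : 1 < Ω) : Ω * (Tp Ω - π/2) = π/2 := by
  have h0 : (2*Ω) ≠ 0 := by positivity
  unfold Tp
  field_simp
  ring

lemma floor_div_eq {T : ℝ} (hT : 0 < T) (n : ℤ) (t : ℝ) (h1 : n*T ≤ t) (h2 : t < (n+1)*T) :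
    ⌊t/T⌋ = n := by
  rw [Int.floor_eq_iff]
  constructor
  · rw [le_div_iff₀ hT]; linarith
  · rw [div_lt_iff₀ hT]; push_cast; push_cast at h2; linarith

lemma yy_eq1 (hΩ : 1 < Ω) (n : ℤ) (t : ℝ) (h1 : n * Tp Ω ≤ t) (h2 : t ≤ n * Tp Ω + π/2) :
    yy Ω t = f₁ Ω n t := by
  have hT := Tp_pos hΩ
  have hTg := Tp_gt hΩ
  have hpi := Real.pi_pos
  have hf : ⌊t / Tp Ω⌋ = n := by
    apply floor_div_eq hT
    · linarith
    · push_cast; nlinarith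
  rcases lt_or_eq_of_le h2 with h | h
  · unfold yy; rw [hf, if_pos (by push_cast; linarith)]
  · unfold yy
    rw [hf, if_neg (by push_cast; rw [h]; push_cast; simp; linarith)]
    unfold f₁ f₂
    rw [h]
    have : n * Tp Ω + π / 2 - (n * Tp Ω + π / 2) = 0 := by ring
    rw [show (n:ℝ) * Tp Ω + π / 2 - n * Tp Ω = π/2 by ring, this, mul_zero,
      Real.cos_zero, Real.sin_pi_div_two]

lemma yyd_eq1 (hΩ : 1 < Ω) (n : ℤ) (t : ℝ) (h1 : n * Tp Ω ≤ t) (h2 : t ≤ n * Tp Ω + π/2) :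
    yyd Ω t = d₁ Ω n t := by
  have hT := Tp_pos hΩ
  have hTg := Tp_gt hΩ
  have hpi := Real.pi_pos
  have hf : ⌊t / Tp Ω⌋ = n := by
    apply floor_div_eq hT
    · linarith
    · push_cast; nlinarith
  rcases lt_or_eq_of_le h2 with h | h
  · unfold yyd; rw [hf, if_pos (by push_cast; linarith)]
  · unfold yyd
    rw [hf, if_neg (by push_cast; rw [h]; push_cast; simp; linarith)]
    unfold d₁ d₂
    rw [h]
    rw [show (n:ℝ) * Tp Ω + π / 2 - n * Tp Ω = π/2 by ring,
      show (n:ℝ) * Tp Ω + π / 2 - (n * Tp Ω + π / 2) = 0 by ring, mul_zero,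
      Real.sin_zero, Real.cos_pi_div_two]
    ring

lemma yy_eq2 (hΩ : 1 < Ω) (n : ℤ) (t : ℝ) (h1 : n * Tp Ω + π/2 ≤ t) (h2 : t ≤ (n+1) * Tp Ω) :
    yy Ω t = f₂ Ω n t := by
  have hT := Tp_pos hΩ
  have hTg := Tp_gt hΩ
  have hpi := Real.pi_pos
  rcases lt_or_eq_of_le h2 with h | h
  · have hf : ⌊t / Tp Ω⌋ = n := by
      apply floor_div_eq hT
      · linarith
      · push_cast; push_cast at h; linarith
    unfold yy; rw [hf, if_neg (by push_cast; linarith)]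
  · have hf : ⌊t / Tp Ω⌋ = n + 1 := by
      apply floor_div_eq hT
      · push_cast; linarith [h.symm.le]
      · push_cast; nlinarith [h]
    unfold yy f₁ f₂
    rw [hf, if_pos (by push_cast; rw [h]; push_cast; nlinarith), h]
    push_cast
    rw [show ((n:ℝ)+1) * Tp Ω - ((n:ℝ)+1) * Tp Ω = 0 by ring]
    rw [show ((n:ℝ)+1) * Tp Ω - (↑n * Tp Ω + π / 2) = Tp Ω - π/2 by ring,
      Omega_T hΩ, Real.cos_pi_div_two]
    simp

lemma yyd_eq2 (hΩ : 1 < Ω) (n : ℤ) (t : ℝ) (h1 : n * Tp Ω + π/2 ≤ t) (h2 : t ≤ (n+1) * Tp Ω) :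
    yyd Ω t = d₂ Ω n t := by
  have hT := Tp_pos hΩ
  have hTg := Tp_gt hΩ
  have hpi := Real.pi_pos
  rcases lt_or_eq_of_le h2 with h | h
  · have hf : ⌊t / Tp Ω⌋ = n := by
      apply floor_div_eq hT
      · linarith
      · push_cast; push_cast at h; linarith
    unfold yyd; rw [hf, if_neg (by push_cast; linarith)]
  · have hf : ⌊t / Tp Ω⌋ = n + 1 := by
      apply floor_div_eq hT
      · push_cast; linarith [h.symm.le]
      · push_cast; nlinarith [h]
    unfold yyd d₁ d₂
    rw [hf, if_pos (by push_cast; rw [h]; push_cast; nlinarith), h]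
    push_cast
    rw [show ((n:ℝ)+1) * Tp Ω - ((n:ℝ)+1) * Tp Ω = 0 by ring]
    rw [show ((n:ℝ)+1) * Tp Ω - (↑n * Tp Ω + π / 2) = Tp Ω - π/2 by ring,
      Omega_T hΩ, Real.sin_pi_div_two, Real.cos_zero]
    rw [zpow_add₀ (by intro hh; rw [neg_eq_zero] at hh; linarith) n 1, zpow_one]
    ring

lemma hasDerivAt_f₁ (n : ℤ) (t : ℝ) : HasDerivAt (f₁ Ω n) (d₁ Ω n t) t := by
  have h : HasDerivAt (fun x : ℝ => x - (n:ℝ) * Tp Ω) 1 t := (hasDerivAt_id t).sub_const _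
  have := (h.sin).const_mul ((-Ω)^n : ℝ)
  refine this.congr_deriv ?_; simp [d₁]

lemma hasDerivAt_f₂ (n : ℤ) (t : ℝ) : HasDerivAt (f₂ Ω n) (d₂ Ω n t) t := by
  have h : HasDerivAt (fun x : ℝ => Ω * (x - ((n:ℝ) * Tp Ω + π/2))) Ω t := by
    simpa using ((hasDerivAt_id t).sub_const ((n:ℝ) * Tp Ω + π/2)).const_mul Ω
  have := (h.cos).const_mul ((-Ω)^n : ℝ)
  unfold f₂ d₂
  refine this.congr_deriv ?_
  ring

lemma hasDerivAt_d₁ (n : ℤ) (t : ℝ) :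
    HasDerivAt (d₁ Ω n) (-(f₁ Ω n t)) t := by
  have h : HasDerivAt (fun x : ℝ => x - (n:ℝ) * Tp Ω) 1 t := (hasDerivAt_id t).sub_const _
  have := (h.cos).const_mul ((-Ω)^n : ℝ)
  unfold d₁ f₁
  refine this.congr_deriv ?_
  ring

lemma hasDerivAt_d₂ (n : ℤ) (t : ℝ) :
    HasDerivAt (d₂ Ω n) (-(Ω^2 * f₂ Ω n t)) t := by
  have h : HasDerivAt (fun x : ℝ => Ω * (x - ((n:ℝ) * Tp Ω + π/2))) Ω t := by
    simpa using ((hasDerivAt_id t).sub_const ((n:ℝ) * Tp Ω + π/2)).const_mul Ω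
  have := ((h.sin).const_mul Ω).const_mul ((-Ω)^n : ℝ)
  unfold d₂ f₂
  refine this.neg.congr_deriv ?_
  ring

/-- gluing lemma -/
lemma glue {y f g : ℝ → ℝ} {d p l r : ℝ} (hl : l < p) (hr : p < r)
    (hf : HasDerivAt f d p) (hg : HasDerivAt g d p)
    (hyf : ∀ x, l ≤ x → x ≤ p → y x = f x) (hyg : ∀ x, p ≤ x → x ≤ r → y x = g x) :
    HasDerivAt y d p := by
  have hfw : HasDerivWithinAt y d (Set.Iic p) p := by
    apply (hf.hasDerivWithinAt).congr_of_eventuallyEq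
    · filter_upwards [Icc_mem_nhdsLE_of_mem (Set.mem_Ioc.mpr ⟨hl, le_refl p⟩)] with x hx
      exact hyf x hx.1 hx.2
    · exact hyf p hl.le le_rfl
  have hgw : HasDerivWithinAt y d (Set.Ici p) p := by
    apply (hg.hasDerivWithinAt).congr_of_eventuallyEq
    · filter_upwards [Icc_mem_nhdsGE_of_mem (Set.mem_Ico.mpr ⟨le_refl p, hr⟩)] with x hx
      exact hyg x hx.1 hx.2
    · exact hyg p le_rfl hr.le
  have := hfw.union hgw
  rw [Set.Iic_union_Ici] at this
  exact hasDerivWithinAt_univ.mp this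

lemma floor_le_mul (hΩ : 1 < Ω) (t : ℝ) : (⌊t / Tp Ω⌋ : ℝ) * Tp Ω ≤ t := by
  have hT := Tp_pos hΩ
  have := Int.floor_le (t / Tp Ω)
  calc (⌊t / Tp Ω⌋ : ℝ) * Tp Ω ≤ (t / Tp Ω) * Tp Ω := by
        exact mul_le_mul_of_nonneg_right this hT.le
    _ = t := by field_simp

lemma lt_floor_add_one_mul (hΩ : 1 < Ω) (t : ℝ) : t < ((⌊t / Tp Ω⌋ : ℝ) + 1) * Tp Ω := by
  have hT := Tp_pos hΩ
  have := Int.lt_floor_add_one (t / Tp Ω)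
  calc t = (t / Tp Ω) * Tp Ω := by field_simp
    _ < ((⌊t / Tp Ω⌋ : ℝ) + 1) * Tp Ω := by
        exact mul_lt_mul_of_pos_right this hT

lemma hasDerivAt_yy (hΩ : 1 < Ω) (t : ℝ) : HasDerivAt (yy Ω) (yyd Ω t) t := by
  have hT := Tp_pos hΩ
  have hTg := Tp_gt hΩ
  have hpi := Real.pi_pos
  set n := ⌊t / Tp Ω⌋ with hn
  have hs1 : (n:ℝ) * Tp Ω ≤ t := floor_le_mul hΩ t
  have hs2 : t < ((n:ℝ)+1) * Tp Ω := lt_floor_add_one_mul hΩ t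
  rcases eq_or_lt_of_le hs1 with h0 | h0
  · -- t = n * Tp Ω
    have e1 : yyd Ω t = d₂ Ω (n-1) t := by
      apply yyd_eq2 hΩ (n-1) t <;> push_cast <;> nlinarith
    rw [e1]
    apply glue (f := f₂ Ω (n-1)) (g := f₁ Ω n)
      (l := ((n:ℝ)-1) * Tp Ω + π/2) (r := (n:ℝ) * Tp Ω + π/2)
      (by nlinarith) (by nlinarith)
      (hasDerivAt_f₂ (n-1) t)
      (by
        have e2 : yyd Ω t = d₁ Ω n t := yyd_eq1 hΩ n t hs1 (by linarith)
        rw [← e1, e2]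
        exact hasDerivAt_f₁ n t)
    · intro x hx1 hx2
      apply yy_eq2 hΩ (n-1) x (by push_cast; linarith) (by push_cast; nlinarith)
    · intro x hx1 hx2
      exact yy_eq1 hΩ n x (by linarith) hx2
  · rcases lt_trichotomy t ((n:ℝ) * Tp Ω + π/2) with h1 | h1 | h1
    · -- interior of first piece
      have e1 : yyd Ω t = d₁ Ω n t := yyd_eq1 hΩ n t hs1 h1.le
      rw [e1]
      apply glue (f := f₁ Ω n) (g := f₁ Ω n)
        (l := (n:ℝ) * Tp Ω) (r := (n:ℝ) * Tp Ω + π/2) h0 h1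
        (hasDerivAt_f₁ n t) (hasDerivAt_f₁ n t)
      · intro x hx1 hx2; exact yy_eq1 hΩ n x hx1 (by linarith)
      · intro x hx1 hx2; exact yy_eq1 hΩ n x (by linarith) hx2
    · -- t = n * Tp Ω + π/2
      have e1 : yyd Ω t = d₁ Ω n t := yyd_eq1 hΩ n t hs1 h1.le
      rw [e1]
      apply glue (f := f₁ Ω n) (g := f₂ Ω n)
        (l := (n:ℝ) * Tp Ω) (r := ((n:ℝ)+1) * Tp Ω) h0 (by nlinarith)
        (hasDerivAt_f₁ n t)
        (by
          have e2 : yyd Ω t = d₂ Ω n t := by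
            apply yyd_eq2 hΩ n t h1.ge (by push_cast; nlinarith)
          rw [← e1, e2]
          exact hasDerivAt_f₂ n t)
      · intro x hx1 hx2; exact yy_eq1 hΩ n x hx1 (by linarith)
      · intro x hx1 hx2
        apply yy_eq2 hΩ n x (by linarith) (by push_cast; linarith)
    · -- interior of second piece
      have e1 : yyd Ω t = d₂ Ω n t := by
        apply yyd_eq2 hΩ n t h1.le (by push_cast; linarith)
      rw [e1]
      apply glue (f := f₂ Ω n) (g := f₂ Ω n)
        (l := (n:ℝ) * Tp Ω + π/2) (r := ((n:ℝ)+1) * Tp Ω) h1 hs2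
        (hasDerivAt_f₂ n t) (hasDerivAt_f₂ n t)
      · intro x hx1 hx2
        apply yy_eq2 hΩ n x hx1 (by push_cast; linarith)
      · intro x hx1 hx2
        apply yy_eq2 hΩ n x (by linarith) (by push_cast; linarith)

lemma hasDerivAt_yyd (hΩ : 1 < Ω) (t : ℝ)
    (h : ∀ n : ℤ, t ≠ n * Tp Ω ∧ t ≠ n * Tp Ω + π/2) :
    HasDerivAt (yyd Ω) (-((1 + aa Ω t) * yy Ω t)) t := by
  have hT := Tp_pos hΩ
  have hTg := Tp_gt hΩ
  have hpi := Real.pi_pos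
  set n := ⌊t / Tp Ω⌋ with hn
  have hs1 : (n:ℝ) * Tp Ω ≤ t := floor_le_mul hΩ t
  have hs2 : t < ((n:ℝ)+1) * Tp Ω := lt_floor_add_one_mul hΩ t
  have h0 : (n:ℝ) * Tp Ω < t := lt_of_le_of_ne hs1 (Ne.symm (h n).1)
  have hfl : t - Tp Ω * (n:ℝ) < π/2 ∨ ¬ (t - Tp Ω * (n:ℝ) < π/2) := em _
  rcases lt_trichotomy t ((n:ℝ) * Tp Ω + π/2) with h1 | h1 | h1
  · -- first piece: aa = 0, yy = f₁
    have ha : aa Ω t = 0 := by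
      unfold aa; rw [← hn, if_pos (by push_cast; linarith)]
    have hy : yy Ω t = f₁ Ω n t := yy_eq1 hΩ n t hs1 h1.le
    rw [ha, hy]
    have hd : HasDerivAt (d₁ Ω n) (-((1 + 0) * f₁ Ω n t)) t := by
      simpa using hasDerivAt_d₁ (Ω := Ω) n t
    apply glue (f := d₁ Ω n) (g := d₁ Ω n)
      (l := (n:ℝ) * Tp Ω) (r := (n:ℝ) * Tp Ω + π/2) h0 h1 hd hd
    · intro x hx1 hx2; exact yyd_eq1 hΩ n x hx1 (by linarith)
    · intro x hx1 hx2; exact yyd_eq1 hΩ n x (by linarith) hx2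
  · exact absurd h1 (h n).2
  · -- second piece: aa = Ω²-1, yy = f₂
    have ha : aa Ω t = Ω^2 - 1 := by
      unfold aa; rw [← hn, if_neg (by push_cast; linarith)]
    have hy : yy Ω t = f₂ Ω n t := yy_eq2 hΩ n t h1.le (by push_cast; linarith)
    rw [ha, hy]
    have hd : HasDerivAt (d₂ Ω n) (-((1 + (Ω^2-1)) * f₂ Ω n t)) t := by
      have := hasDerivAt_d₂ (Ω := Ω) n t
      convert this using 1; ring
    apply glue (f := d₂ Ω n) (g := d₂ Ω n)
      (l := (n:ℝ) * Tp Ω + π/2) (r := ((n:ℝ)+1) * Tp Ω) h1 hs2 hd hd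
    · intro x hx1 hx2
      apply yyd_eq2 hΩ n x hx1 (by push_cast; linarith)
    · intro x hx1 hx2
      apply yyd_eq2 hΩ n x (by linarith) (by push_cast; linarith)

end Stmt14Aux

end StmtAux

theorem stmt_14 (ε : ℝ) (hε : 0 < ε) :
    ∃ b c C T : ℝ, 1 < b ∧ 0 < c ∧ c < 2 * Real.sqrt b ∧ 0 < T ∧
      C < (π + ε) * c * Real.sqrt b ∧
      ∃ a : ℝ → ℝ, Measurable a ∧ (∀ t, a (t + T) = a t) ∧
        (∀ t, 0 ≤ t → 0 ≤ a t ∧ a t ≤ C) ∧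
        ∃ u u' : ℝ → ℝ,
          (∀ t, 0 ≤ t → HasDerivAt u (u' t) t) ∧
          (∀ᵐ t ∂volume, 0 ≤ t →
            HasDerivAt u' (-(c * u' t + (b + a t) * u t)) t) ∧
          ¬ ∃ M : ℝ, ∀ t : ℝ, 0 ≤ t → |u t| ≤ M := by
  classical
  have hπ3 : (3:ℝ) < π := Real.pi_gt_three
  have hπ4 : π < 3.15 := Real.pi_lt_d2
  obtain ⟨ε₀, hε₀def⟩ : ∃ x : ℝ, x = min ε 1 := ⟨_, rfl⟩
  have hε₀ : 0 < ε₀ := by rw [hε₀def]; exact lt_min hε (by norm_num)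
  have hε₀1 : ε₀ ≤ 1 := by rw [hε₀def]; exact min_le_right _ _
  have hε₀ε : ε₀ ≤ ε := by rw [hε₀def]; exact min_le_left _ _
  obtain ⟨c, hcdef⟩ : ∃ x : ℝ, x = ε₀ / 100 := ⟨_, rfl⟩
  have hc : 0 < c := by rw [hcdef]; linarith
  have hc1 : c ≤ 1/100 := by rw [hcdef]; linarith
  obtain ⟨Ω, hΩdef⟩ : ∃ x : ℝ, x = 1 + (π + ε₀/2) * c / 2 := ⟨_, rfl⟩
  have hΩ : 1 < Ω := by
    have h0 : 0 < (π + ε₀/2) * c := mul_pos (by linarith) hc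
    rw [hΩdef]; linarith
  have hΩe : Ω - 1 = (π + ε₀/2) * c / 2 := by rw [hΩdef]; ring
  have hδ2 : Ω - 1 ≤ 2 * c := by
    nlinarith [mul_nonneg hc.le (show (0:ℝ) ≤ 4 - (π + ε₀/2) by linarith)]
  obtain ⟨T, hTdef⟩ : ∃ x : ℝ, x = Stmt14Aux.Tp Ω := ⟨_, rfl⟩
  have hT : 0 < T := by rw [hTdef]; exact Stmt14Aux.Tp_pos hΩ
  have hTlt : T < π := by rw [hTdef]; exact Stmt14Aux.Tp_lt hΩ
  obtain ⟨b, hbdef⟩ : ∃ x : ℝ, x = 1 + c^2/4 := ⟨_, rfl⟩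
  have hb : 1 < b := by rw [hbdef]; nlinarith
  have hsb : 1 ≤ Real.sqrt b := by
    rw [show (1:ℝ) = Real.sqrt 1 by simp]
    exact Real.sqrt_le_sqrt (by nlinarith)
  -- growth inequality
  have hx1 : c * π / 2 < 1 := by nlinarith
  have hx0 : 0 < 1 - c * π / 2 := by linarith
  have hexp : Real.exp (c * π / 2) ≤ 1 / (1 - c * π / 2) := by
    have h1 : 1 - c * π / 2 ≤ (Real.exp (c * π / 2))⁻¹ := by
      have := Real.add_one_le_exp (-(c * π / 2))
      rw [Real.exp_neg] at this
      linarith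
    have h2 : 0 < Real.exp (c * π / 2) := Real.exp_pos _
    rw [le_div_iff₀ hx0]
    calc Real.exp (c * π / 2) * (1 - c * π / 2)
        ≤ Real.exp (c * π / 2) * (Real.exp (c * π / 2))⁻¹ :=
          mul_le_mul_of_nonneg_left h1 h2.le
      _ = 1 := mul_inv_cancel₀ h2.ne'
  have hgrow : Real.exp (c * T / 2) < Ω := by
    have h1 : c * T / 2 ≤ c * π / 2 := by nlinarith
    have h2 : Real.exp (c * T / 2) ≤ Real.exp (c * π / 2) := Real.exp_le_exp.mpr h1
    have h3 : 1 / (1 - c * π / 2) < Ω := by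
      rw [div_lt_iff₀ hx0, hΩdef]
      have hp : (π + ε₀/2) * π < 12 := by nlinarith
      have hkey : (π + ε₀/2) * π * c < ε₀ := by
        nlinarith [mul_pos hc (show (0:ℝ) < 12 - (π + ε₀/2) * π by linarith)]
      have hexpand : (1 + (π + ε₀/2) * c / 2) * (1 - c * π / 2)
          = 1 + c * ε₀ / 4 - (π + ε₀/2) * π * c^2 / 4 := by ring
      have h4 : (π + ε₀/2) * π * c^2 < c * ε₀ := by
        nlinarith [mul_lt_mul_of_pos_left hkey hc]
      rw [hexpand]; linarith
    linarith
  refine ⟨b, c, Ω^2 - 1, T, hb, hc, by linarith, hT, ?_, Stmt14Aux.aa Ω, ?_, ?_, ?_,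
    (fun t => Real.exp (-(c/2) * t) * Stmt14Aux.yy Ω t),
    (fun t => Real.exp (-(c/2) * t) * (Stmt14Aux.yyd Ω t - c/2 * Stmt14Aux.yy Ω t)),
    ?_, ?_, ?_⟩
  · -- C bound
    have hΩ2 : Ω^2 - 1 = (π + ε₀/2) * c + (Ω - 1)^2 := by rw [hΩdef]; ring
    have hsq : (Ω - 1)^2 ≤ 4 * c^2 := by
      nlinarith [hδ2, show (0:ℝ) ≤ Ω - 1 by linarith]
    have hc2 : 4 * c^2 = c * (ε₀/25) := by rw [hcdef]; ring
    have h1 : Ω^2 - 1 < (π + ε) * c := by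
      nlinarith [mul_pos hc (show (0:ℝ) < ε - ε₀/2 - ε₀/25 by linarith)]
    have h2 : (π + ε) * c ≤ (π + ε) * c * Real.sqrt b :=
      le_mul_of_one_le_right (by positivity) hsb
    linarith
  · -- measurability
    unfold Stmt14Aux.aa
    apply Measurable.ite _ measurable_const measurable_const
    apply measurableSet_lt _ measurable_const
    exact measurable_id.sub
      ((measurable_from_top.comp (Int.measurable_floor.comp
        (measurable_id.div_const (Stmt14Aux.Tp Ω)))).const_mul (Stmt14Aux.Tp Ω))
  · -- periodicity
    intro t
    have hfl : ⌊(t + T) / T⌋ = ⌊t / T⌋ + 1 := by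
      rw [show (t + T) / T = t / T + 1 by field_simp, Int.floor_add_one]
    show Stmt14Aux.aa Ω (t + T) = Stmt14Aux.aa Ω t
    unfold Stmt14Aux.aa
    rw [← hTdef, hfl]
    have he : t + T - T * ((⌊t / T⌋ : ℝ) + 1) = t - T * (⌊t / T⌋ : ℝ) := by ring
    push_cast
    rw [he]
  · -- bounds on a
    intro t _
    constructor
    · unfold Stmt14Aux.aa
      split_ifs
      · exact le_refl _
      · nlinarith
    · unfold Stmt14Aux.aa
      split_ifs
      · nlinarith
      · exact le_refl _
  · -- first derivative
    intro t _
    have hE : HasDerivAt (fun s => Real.exp (-(c/2) * s)) (Real.exp (-(c/2) * t) * (-(c/2))) t := by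
      have h0 : HasDerivAt (fun s : ℝ => -(c/2) * s) (-(c/2)) t := by
        simpa using (hasDerivAt_id t).const_mul (-(c/2))
      exact h0.exp
    have := hE.mul (Stmt14Aux.hasDerivAt_yy hΩ t)
    refine this.congr_deriv ?_
    ring
  · -- a.e. second derivative
    have hJ : volume {t : ℝ | ∃ n : ℤ, t = n * T ∨ t = n * T + π/2} = 0 := by
      apply Set.Countable.measure_zero
      have hsub : {t : ℝ | ∃ n : ℤ, t = n * T ∨ t = n * T + π/2} ⊆
          Set.range (fun n : ℤ => (n:ℝ) * T) ∪ Set.range (fun n : ℤ => (n:ℝ) * T + π/2) := by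
        rintro t ⟨n, h | h⟩
        · exact Or.inl ⟨n, h.symm⟩
        · exact Or.inr ⟨n, h.symm⟩
      exact Set.Countable.mono hsub ((Set.countable_range _).union (Set.countable_range _))
    filter_upwards [measure_eq_zero_iff_ae_notMem.mp hJ] with t ht _
    have hnj : ∀ n : ℤ, t ≠ n * Stmt14Aux.Tp Ω ∧ t ≠ n * Stmt14Aux.Tp Ω + π/2 := by
      intro n
      rw [← hTdef]
      constructor
      · intro he; exact ht ⟨n, Or.inl he⟩
      · intro he; exact ht ⟨n, Or.inr he⟩
    have hder := Stmt14Aux.hasDerivAt_yyd hΩ t hnj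
    have hy := Stmt14Aux.hasDerivAt_yy hΩ t
    have hE : HasDerivAt (fun s => Real.exp (-(c/2) * s)) (Real.exp (-(c/2) * t) * (-(c/2))) t := by
      have h0 : HasDerivAt (fun s : ℝ => -(c/2) * s) (-(c/2)) t := by
        simpa using (hasDerivAt_id t).const_mul (-(c/2))
      exact h0.exp
    have hcomb := hE.mul (hder.sub (hy.const_mul (c/2)))
    refine hcomb.congr_deriv ?_
    rw [hbdef]
    simp only [Pi.sub_apply]
    ring
  · -- unboundedness
    rintro ⟨M, hM⟩
    obtain ⟨r, hrdef⟩ : ∃ x : ℝ, x = Ω * Real.exp (-(c * T / 2)) := ⟨_, rfl⟩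
    have hr1 : 1 < r := by
      have h2 : 0 < Real.exp (c * T / 2) := Real.exp_pos _
      rw [hrdef, Real.exp_neg, ← div_eq_mul_inv, lt_div_iff₀ h2, one_mul]
      exact hgrow
    obtain ⟨n, hn⟩ := pow_unbounded_of_one_lt (M * Real.exp (c * π / 4)) hr1
    have htn : (0:ℝ) ≤ (n:ℝ) * T + π/2 := by
      have hn0 : (0:ℝ) ≤ (n:ℝ) := Nat.cast_nonneg n
      nlinarith
    have hyval : Stmt14Aux.yy Ω ((n:ℝ) * T + π/2) = (-Ω)^(n:ℤ) := by
      have h1 := Stmt14Aux.yy_eq1 hΩ (n:ℤ) ((n:ℝ) * T + π/2)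
        (by push_cast; rw [← hTdef]; linarith) (by push_cast; rw [← hTdef])
      rw [h1]
      unfold Stmt14Aux.f₁
      rw [← hTdef]
      push_cast
      rw [show (n:ℝ) * T + π/2 - (n:ℝ) * T = π/2 by ring, Real.sin_pi_div_two, mul_one]
    have hMn := hM ((n:ℝ) * T + π/2) htn
    simp only at hMn
    have habs : |Real.exp (-(c/2) * ((n:ℝ) * T + π/2)) * Stmt14Aux.yy Ω ((n:ℝ) * T + π/2)|
        = Real.exp (-(c/2) * ((n:ℝ) * T + π/2)) * Ω^n := by
      rw [hyval, abs_mul, Real.abs_exp, zpow_natCast, abs_pow, abs_neg,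
        abs_of_pos (by linarith : (0:ℝ) < Ω)]
    have hkey : r^n = Real.exp (-(c/2) * ((n:ℝ) * T + π/2)) * Ω^n * Real.exp (c * π / 4) := by
      have he : Real.exp (-(c/2) * ((n:ℝ) * T + π/2)) * Real.exp (c * π / 4)
          = Real.exp ((n:ℝ) * (-(c * T / 2))) := by
        rw [← Real.exp_add]; congr 1; ring
      calc r^n = Ω^n * Real.exp ((n:ℝ) * (-(c * T / 2))) := by
            rw [hrdef, mul_pow, ← Real.exp_nat_mul]
        _ = Real.exp (-(c/2) * ((n:ℝ) * T + π/2)) * Ω^n * Real.exp (c * π / 4) := by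
            rw [← he]; ring
    have hle : r^n ≤ M * Real.exp (c * π / 4) := by
      rw [hkey]
      have h1 : Real.exp (-(c/2) * ((n:ℝ) * T + π/2)) * Ω^n ≤ M := by
        rw [← habs]; exact hMn
      nlinarith [Real.exp_pos (c * π / 4), abs_nonneg (Real.exp (-(c/2) * ((n:ℝ) * T + π/2)) * Stmt14Aux.yy Ω ((n:ℝ) * T + π/2)), habs]
    linarith
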